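/- arXiv:1306.3919 — 2 statements merged into one kernel-verified Lean document; each statement's English description precedes it below -/
import Mathlib

section
/- If n \ge 7 is a prime number, then the quantity (4/3)\sigma(n) - (16/3)\sigma(n/2) - 2\sum_{a,b\in\mathbb{Z}, ab=2n} sgn^+(N) sgn^+(\tilde N)(|N+1/6| - |\tilde N+1/6|) equals (4/3)(n+4), where N=(-3a+b-1)/6, \tilde N=(3a+b-1)/6, and the sum runs over integer factorizations ab=2n for which N and \tilde N are both integers. -/
open scoped BigOperators

/-- The divisor sum `σ(x)`, extended by `0` at non-(positive integers). -/
def sigmaQ (x : ℚ) : ℚ :=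
  if 0 < x.num ∧ x.den = 1 then ((∑ d ∈ (x.num.toNat).divisors, d : ℕ) : ℚ) else 0

/-- `sgn⁺(k) = sgn(k)` for `k ≠ 0`, and `sgn⁺(0) = 1`. -/
def sgnPlus (k : ℤ) : ℤ := if k = 0 then 1 else Int.sign k

lemma sgnPlus_nonneg {k : ℤ} (h : 0 ≤ k) : sgnPlus k = 1 := by
  unfold sgnPlus
  rcases eq_or_lt_of_le h with h0 | h0
  · simp [← h0]
  · rw [if_neg (by omega)]; exact Int.sign_eq_one_iff_pos.mpr h0

lemma sgnPlus_neg {k : ℤ} (h : k < 0) : sgnPlus k = -1 := by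
  unfold sgnPlus
  rw [if_neg (by omega)]; exact Int.sign_eq_neg_one_iff_neg.mpr h

lemma nat_div_class {n d : ℕ} (hp : n.Prime) (hn2 : n ≠ 2) (hd : d ∣ 2 * n) :
    d = 1 ∨ d = 2 ∨ d = n ∨ d = 2 * n := by
  by_cases h2 : 2 ∣ d
  · obtain ⟨e, rfl⟩ := h2
    have he : e ∣ n := (mul_dvd_mul_iff_left (two_ne_zero)).mp hd
    rcases (Nat.Prime.eq_one_or_self_of_dvd hp e he) with h | h <;> omega
  · have hcop : Nat.Coprime d 2 := by
      rcases Nat.coprime_or_dvd_of_prime Nat.prime_two d with h | h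
      · exact h.symm
      · exact absurd h h2
    have : d ∣ n := (Nat.Coprime.dvd_of_dvd_mul_left hcop hd)
    rcases (Nat.Prime.eq_one_or_self_of_dvd hp d this) with h | h <;> omega


lemma sgn_abs (N : ℤ) : ((sgnPlus N : ℤ) : ℚ) * |(N : ℚ) + 1 / 6| = (N : ℚ) + 1 / 6 := by
  rcases le_or_gt 0 N with h | h
  · rw [sgnPlus_nonneg h, abs_of_nonneg (by
      have : (0 : ℚ) ≤ (N : ℚ) := by exact_mod_cast h
      linarith)]
    push_cast; ring
  · rw [sgnPlus_neg h, abs_of_neg (by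
      have : (N : ℚ) ≤ -1 := by exact_mod_cast (by omega : N ≤ -1)
      linarith)]
    push_cast; ring

lemma gterm (N M : ℤ) :
    ((sgnPlus N * sgnPlus M : ℤ) : ℚ) * (|(N : ℚ) + 1 / 6| - |(M : ℚ) + 1 / 6|)
      = ((sgnPlus M : ℤ) : ℚ) * ((N : ℚ) + 1 / 6) - ((sgnPlus N : ℤ) : ℚ) * ((M : ℚ) + 1 / 6) := by
  have h1 := sgn_abs N
  have h2 := sgn_abs M
  have e : ((sgnPlus N * sgnPlus M : ℤ) : ℚ) * (|(N : ℚ) + 1 / 6| - |(M : ℚ) + 1 / 6|)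
      = ((sgnPlus M : ℤ) : ℚ) * (((sgnPlus N : ℤ) : ℚ) * |(N : ℚ) + 1 / 6|)
        - ((sgnPlus N : ℤ) : ℚ) * (((sgnPlus M : ℤ) : ℚ) * |(M : ℚ) + 1 / 6|) := by
    push_cast; ring
  rw [e, h1, h2]

theorem rhs_at_primes (n : ℕ) (hp : n.Prime) (h7 : 7 ≤ n) :
    (4 / 3) * sigmaQ (n : ℚ) - (16 / 3) * sigmaQ ((n : ℚ) / 2)
      - 2 * (∑ᶠ p : ℤ × ℤ,
          if p.1 * p.2 = 2 * (n : ℤ) ∧ (6 : ℤ) ∣ (-3 * p.1 + p.2 - 1)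
              ∧ (6 : ℤ) ∣ (3 * p.1 + p.2 - 1) then
            ((sgnPlus ((-3 * p.1 + p.2 - 1) / 6) * sgnPlus ((3 * p.1 + p.2 - 1) / 6) : ℤ) : ℚ) *
              (|(((-3 * p.1 + p.2 - 1) / 6 : ℤ) : ℚ) + 1 / 6|
                - |(((3 * p.1 + p.2 - 1) / 6 : ℤ) : ℚ) + 1 / 6|)
          else 0)
    = (4 / 3) * ((n : ℚ) + 4) := by
  have hodd : ¬ (2 ∣ n) := by
    intro h
    have := (Nat.prime_dvd_prime_iff_eq Nat.prime_two hp).mp h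
    omega
  have h3 : ¬ (3 ∣ n) := by
    intro h
    have := (Nat.prime_dvd_prime_iff_eq Nat.prime_three hp).mp h
    omega
  -- sigma values
  have hs1 : sigmaQ (n : ℚ) = (n : ℚ) + 1 := by
    unfold sigmaQ
    rw [if_pos (show 0 < (n : ℚ).num ∧ (n : ℚ).den = 1 by simp; all_goals omega)]
    rw [show ((n : ℚ).num.toNat) = n by simp]
    rw [hp.divisors, Finset.sum_pair (by omega)]
    push_cast; ring
  have hs2 : sigmaQ ((n : ℚ) / 2) = 0 := by
    unfold sigmaQ
    rw [if_neg]
    rintro ⟨h1, h2⟩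
    have hnum := (Rat.den_eq_one_iff _).mp h2
    have h2n : ((n : ℚ)) = 2 * (((n : ℚ) / 2).num : ℚ) := by
      rw [hnum]; ring
    have : (n : ℤ) = 2 * ((n : ℚ) / 2).num := by exact_mod_cast h2n
    omega
  rw [hs1, hs2]
  set f : ℤ × ℤ → ℚ := fun p =>
          if p.1 * p.2 = 2 * (n : ℤ) ∧ (6 : ℤ) ∣ (-3 * p.1 + p.2 - 1)
              ∧ (6 : ℤ) ∣ (3 * p.1 + p.2 - 1) then
            ((sgnPlus ((-3 * p.1 + p.2 - 1) / 6) * sgnPlus ((3 * p.1 + p.2 - 1) / 6) : ℤ) : ℚ) *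
              (|(((-3 * p.1 + p.2 - 1) / 6 : ℤ) : ℚ) + 1 / 6|
                - |(((3 * p.1 + p.2 - 1) / 6 : ℤ) : ℚ) + 1 / 6|)
          else 0 with hf
  have hn0 : (n : ℤ) ≠ 0 := by omega
  have hsum : (∑ᶠ p : ℤ × ℤ, f p) = -2 := by
    classical
    set S : Finset (ℤ × ℤ) :=
      {(1, 2 * (n : ℤ)), (2, (n : ℤ)), ((n : ℤ), 2), (2 * (n : ℤ), 1),
       (-1, -(2 * (n : ℤ))), (-2, -(n : ℤ)), (-(n : ℤ), -2), (-(2 * (n : ℤ)), -1)} with hS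
    have hsub : Function.support f ⊆ (S : Set (ℤ × ℤ)) := by
      rintro ⟨a, b⟩ hab
      have hne : f (a, b) ≠ 0 := hab
      rw [hf] at hne
      simp only at hne
      by_cases hc : a * b = 2 * (n : ℤ) ∧ (6 : ℤ) ∣ (-3 * a + b - 1) ∧ (6 : ℤ) ∣ (3 * a + b - 1)
      · obtain ⟨hmul, -, -⟩ := hc
        have hdvd : a.natAbs ∣ 2 * n := by
          have h1 : a ∣ 2 * (n : ℤ) := Dvd.intro b hmul
          have h2 := Int.natAbs_dvd_natAbs.mpr h1
          rwa [show ((2 * (n : ℤ)).natAbs) = 2 * n by simp [Int.natAbs_mul]] at h2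
        have hclass := nat_div_class hp (by omega) hdvd
        have hacase : a = 1 ∨ a = 2 ∨ a = (n : ℤ) ∨ a = 2 * (n : ℤ) ∨
            a = -1 ∨ a = -2 ∨ a = -(n : ℤ) ∨ a = -(2 * (n : ℤ)) := by omega
        simp only [hS, Finset.coe_insert, Set.mem_insert_iff, Finset.coe_singleton,
          Set.mem_singleton_iff, Prod.mk.injEq]
        rcases hacase with rfl | rfl | rfl | rfl | rfl | rfl | rfl | rfl
        · exact Or.inl ⟨rfl, by omega⟩
        · exact Or.inr (Or.inl ⟨rfl, by omega⟩)
        · refine Or.inr (Or.inr (Or.inl ⟨rfl, ?_⟩))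
          exact mul_left_cancel₀ hn0 (by linarith)
        · refine Or.inr (Or.inr (Or.inr (Or.inl ⟨rfl, ?_⟩)))
          have : (2 * (n : ℤ)) * b = (2 * (n : ℤ)) * 1 := by linarith
          exact mul_left_cancel₀ (by omega) this
        · exact Or.inr (Or.inr (Or.inr (Or.inr (Or.inl ⟨rfl, by omega⟩))))
        · exact Or.inr (Or.inr (Or.inr (Or.inr (Or.inr (Or.inl ⟨rfl, by omega⟩)))))
        · refine Or.inr (Or.inr (Or.inr (Or.inr (Or.inr (Or.inr (Or.inl ⟨rfl, ?_⟩))))))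
          have : (n : ℤ) * (-b) = (n : ℤ) * 2 := by linarith
          have hb := mul_left_cancel₀ hn0 this
          omega
        · refine Or.inr (Or.inr (Or.inr (Or.inr (Or.inr (Or.inr (Or.inr ⟨rfl, ?_⟩))))))
          have : (2 * (n : ℤ)) * (-b) = (2 * (n : ℤ)) * 1 := by linarith
          have hb := mul_left_cancel₀ (by omega : (2 * (n : ℤ)) ≠ 0) this
          omega
      · exact absurd (if_neg hc) hne
    rw [finsum_eq_sum_of_support_subset f hsub]
    have key : ∀ a b N M : ℤ, a * b = 2 * (n : ℤ) → -3 * a + b - 1 = 6 * N →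
        3 * a + b - 1 = 6 * M →
        f (a, b) = ((sgnPlus M : ℤ) : ℚ) * ((N : ℚ) + 1 / 6)
          - ((sgnPlus N : ℤ) : ℚ) * ((M : ℚ) + 1 / 6) := by
      intro a b N M h1 h2 h3
      rw [hf]
      simp only
      rw [if_pos ⟨h1, ⟨N, h2⟩, ⟨M, h3⟩⟩,
        show (-3 * a + b - 1) / 6 = N by omega, show (3 * a + b - 1) / 6 = M by omega]
      exact gterm N M
    have key0 : ∀ a b : ℤ, ¬ ((6 : ℤ) ∣ (3 * a + b - 1)) → f (a, b) = 0 := by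
      intro a b h
      rw [hf]
      simp only
      rw [if_neg]
      rintro ⟨-, -, hd⟩
      exact h hd
    have hn6 : n % 6 = 1 ∨ n % 6 = 5 := by omega
    rw [hS]
    rw [Finset.sum_insert (by simp; all_goals omega), Finset.sum_insert (by simp; all_goals omega),
      Finset.sum_insert (by simp; all_goals omega), Finset.sum_insert (by simp; all_goals omega),
      Finset.sum_insert (by simp; all_goals omega), Finset.sum_insert (by simp; all_goals omega),
      Finset.sum_insert (by simp; all_goals omega), Finset.sum_singleton]
    rcases hn6 with hA | hB
    · obtain ⟨j, hj, hj1⟩ : ∃ j : ℕ, n = 6 * j + 1 ∧ 1 ≤ j := ⟨n / 6, by omega, by omega⟩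
      have e1 : f (1, 2 * (n : ℤ)) = 0 := key0 _ _ (by omega)
      have e2 : f (2, (n : ℤ)) = -2 := by
        rw [key 2 (n : ℤ) ((j : ℤ) - 1) ((j : ℤ) + 1) (by ring) (by omega) (by omega),
          sgnPlus_nonneg (show (0 : ℤ) ≤ (j : ℤ) - 1 by omega),
          sgnPlus_nonneg (show (0 : ℤ) ≤ (j : ℤ) + 1 by omega)]
        push_cast; ring
      have e3 : f ((n : ℤ), 2) = 0 := key0 _ _ (by omega)
      have e4 : f (2 * (n : ℤ), 1) = 1 / 3 := by
        rw [key (2 * (n : ℤ)) 1 (-(6 * (j : ℤ) + 1)) (6 * (j : ℤ) + 1) (by ring) (by omega)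
            (by omega),
          sgnPlus_neg (show -(6 * (j : ℤ) + 1) < 0 by omega),
          sgnPlus_nonneg (show (0 : ℤ) ≤ 6 * (j : ℤ) + 1 by omega)]
        push_cast; ring
      have e5 : f (-1, -(2 * (n : ℤ))) = -1 := by
        rw [key (-1) (-(2 * (n : ℤ))) (-(2 * (j : ℤ))) (-(2 * (j : ℤ) + 1)) (by ring) (by omega)
            (by omega),
          sgnPlus_neg (show -(2 * (j : ℤ)) < 0 by omega),
          sgnPlus_neg (show -(2 * (j : ℤ) + 1) < 0 by omega)]
        push_cast; ring
      have e6 : f (-2, -(n : ℤ)) = 0 := key0 _ _ (by omega)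
      have e7 : f (-(n : ℤ), -2) = 2 / 3 := by
        rw [key (-(n : ℤ)) (-2) (3 * (j : ℤ)) (-(3 * (j : ℤ) + 1)) (by ring) (by omega)
            (by omega),
          sgnPlus_nonneg (show (0 : ℤ) ≤ 3 * (j : ℤ) by omega),
          sgnPlus_neg (show -(3 * (j : ℤ) + 1) < 0 by omega)]
        push_cast; ring
      have e8 : f (-(2 * (n : ℤ)), -1) = 0 := key0 _ _ (by omega)
      rw [e1, e2, e3, e4, e5, e6, e7, e8]
      norm_num
    · obtain ⟨j, hj, hj1⟩ : ∃ j : ℕ, n = 6 * j + 5 ∧ 1 ≤ j := ⟨n / 6, by omega, by omega⟩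
      have e1 : f (1, 2 * (n : ℤ)) = -1 := by
        rw [key 1 (2 * (n : ℤ)) (2 * (j : ℤ) + 1) (2 * (j : ℤ) + 2) (by ring) (by omega)
            (by omega),
          sgnPlus_nonneg (show (0 : ℤ) ≤ 2 * (j : ℤ) + 1 by omega),
          sgnPlus_nonneg (show (0 : ℤ) ≤ 2 * (j : ℤ) + 2 by omega)]
        push_cast; ring
      have e2 : f (2, (n : ℤ)) = 0 := key0 _ _ (by omega)
      have e3 : f ((n : ℤ), 2) = 0 := key0 _ _ (by omega)
      have e4 : f (2 * (n : ℤ), 1) = 1 / 3 := by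
        rw [key (2 * (n : ℤ)) 1 (-(6 * (j : ℤ) + 5)) (6 * (j : ℤ) + 5) (by ring) (by omega)
            (by omega),
          sgnPlus_neg (show -(6 * (j : ℤ) + 5) < 0 by omega),
          sgnPlus_nonneg (show (0 : ℤ) ≤ 6 * (j : ℤ) + 5 by omega)]
        push_cast; ring
      have e5 : f (-1, -(2 * (n : ℤ))) = 0 := key0 _ _ (by omega)
      have e6 : f (-2, -(n : ℤ)) = -2 := by
        rw [key (-2) (-(n : ℤ)) (-(j : ℤ)) (-((j : ℤ) + 2)) (by ring) (by omega) (by omega),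
          sgnPlus_neg (show -(j : ℤ) < 0 by omega),
          sgnPlus_neg (show -((j : ℤ) + 2) < 0 by omega)]
        push_cast; ring
      have e7 : f (-(n : ℤ), -2) = 2 / 3 := by
        rw [key (-(n : ℤ)) (-2) (3 * (j : ℤ) + 2) (-(3 * (j : ℤ) + 3)) (by ring) (by omega)
            (by omega),
          sgnPlus_nonneg (show (0 : ℤ) ≤ 3 * (j : ℤ) + 2 by omega),
          sgnPlus_neg (show -(3 * (j : ℤ) + 3) < 0 by omega)]
        push_cast; ring
      have e8 : f (-(2 * (n : ℤ)), -1) = 0 := key0 _ _ (by omega)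
      rw [e1, e2, e3, e4, e5, e6, e7, e8]
      norm_num
  rw [hsum]; ring
end

section
/- For all real k with k \ge 2, real l > 0, positive rationals n and \tilde m with n < \tilde m, and m = n - \tilde m < 0: \int_0^\infty \Gamma(1-k, 4\pi|m| y) e^{-4\pi n y} y^{k+l-2} dy = ((4\pi|m|)^{1-k} \Gamma(l) / ((k+l-1)(4\pi \tilde m)^l)) \cdot {}_2F_1(1, l, k+l; n/\tilde m). -/
open Real
open scoped BigOperators

/-- The upper incomplete Gamma function `Γ(s, x) = ∫_x^∞ e^{-t} t^{s-1} dt`. -/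
noncomputable def incGamma (s x : ℝ) : ℝ := ∫ t in Set.Ioi x, Real.exp (-t) * t ^ (s - 1)

/-- Pochhammer symbol `(p)_j = p (p+1) ⋯ (p+j-1)`. -/
noncomputable def poch (p : ℝ) (j : ℕ) : ℝ := ∏ i ∈ Finset.range j, (p + (i : ℝ))

/-- Gauss hypergeometric series `₂F₁(a, b, c; z)`. -/
noncomputable def twoF1 (a b c z : ℝ) : ℝ :=
  ∑' j : ℕ, (poch a j * poch b j / (poch c j * (j.factorial : ℝ))) * z ^ j

open MeasureTheory Set

lemma poch_succ' (p : ℝ) (j : ℕ) : poch p (j + 1) = p * poch (p + 1) j := by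
  rw [poch, Finset.prod_range_succ', poch]
  simp only [Nat.cast_zero, add_zero, mul_comm]
  congr 1
  refine Finset.prod_congr rfl fun i _ => by push_cast; ring

lemma poch_one (j : ℕ) : poch 1 j = j.factorial := by
  induction j with
  | zero => simp [poch]
  | succ j ih =>
      rw [show poch 1 (j+1) = poch 1 j * (1 + j) from Finset.prod_range_succ _ _, ih]
      push_cast [Nat.factorial_succ]; ring

lemma poch_pos {p : ℝ} (hp : 0 < p) (j : ℕ) : 0 < poch p j :=
  Finset.prod_pos fun i _ => by positivity

lemma Gamma_add_nat (p : ℝ) (hp : 0 < p) (j : ℕ) :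
    Real.Gamma (p + j) = poch p j * Real.Gamma p := by
  induction j with
  | zero => simp [poch]
  | succ j ih =>
      have h1 : p + ((j:ℕ) + 1 : ℕ) = (p + j) + 1 := by push_cast; ring
      have h2 : poch p (j+1) = poch p j * (p + j) := Finset.prod_range_succ _ _
      rw [h1, Real.Gamma_add_one (by positivity), ih, h2]; ring

lemma hasSum_integral_of_nonneg' {s : Set ℝ} (hs : MeasurableSet s)
    {f : ℕ → ℝ → ℝ} {g : ℝ → ℝ}
    (hmeas : ∀ j, AEMeasurable (f j) (volume.restrict s))
    (hnn : ∀ j, ∀ t ∈ s, 0 ≤ f j t)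
    (hsum : ∀ t ∈ s, HasSum (fun j => f j t) (g t))
    (hg : IntegrableOn g s) :
    HasSum (fun j => ∫ t in s, f j t) (∫ t in s, g t) := by
  have hnn' : ∀ j, 0 ≤ᵐ[volume.restrict s] f j := fun j =>
    (ae_restrict_iff' hs).2 (Filter.Eventually.of_forall (hnn j))
  have hgnn : 0 ≤ᵐ[volume.restrict s] g :=
    (ae_restrict_iff' hs).2 (Filter.Eventually.of_forall fun t ht => by
      rw [← (hsum t ht).tsum_eq]; exact tsum_nonneg fun j => hnn j t ht)
  have key : ∑' j, ∫⁻ t in s, ENNReal.ofReal (f j t) = ∫⁻ t in s, ENNReal.ofReal (g t) := by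
    rw [← lintegral_tsum (fun j => (hmeas j).ennreal_ofReal)]
    refine setLIntegral_congr_fun hs (fun t ht => ?_)
    rw [← ENNReal.ofReal_tsum_of_nonneg (fun j => hnn j t ht) (hsum t ht).summable,
      (hsum t ht).tsum_eq]
  have hgl : ∫⁻ t in s, ENNReal.ofReal (g t) = ENNReal.ofReal (∫ t in s, g t) :=
    (ofReal_integral_eq_lintegral_ofReal hg hgnn).symm
  have htot : ∑' j, ∫⁻ t in s, ENNReal.ofReal (f j t) ≠ ⊤ := by
    rw [key, hgl]; exact ENNReal.ofReal_ne_top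
  have hfin : ∀ j, ∫⁻ t in s, ENNReal.ofReal (f j t) ≠ ⊤ := fun j =>
    ne_top_of_le_ne_top htot (ENNReal.le_tsum j)
  have heq : ∀ j, ∫ t in s, f j t = (∫⁻ t in s, ENNReal.ofReal (f j t)).toReal := fun j =>
    integral_eq_lintegral_of_nonneg_ae (hnn' j) (hmeas j).aestronglyMeasurable
  have hsumm : Summable fun j => ∫ t in s, f j t := by
    refine Summable.congr (ENNReal.summable_toReal htot) fun j => (heq j).symm
  have hts : ∑' j, ∫ t in s, f j t = ∫ t in s, g t := by
    calc ∑' j, ∫ t in s, f j t = ∑' j, (∫⁻ t in s, ENNReal.ofReal (f j t)).toReal :=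
          tsum_congr heq
      _ = (∑' j, ∫⁻ t in s, ENNReal.ofReal (f j t)).toReal := (ENNReal.tsum_toReal_eq hfin).symm
      _ = (ENNReal.ofReal (∫ t in s, g t)).toReal := by rw [key, hgl]
      _ = ∫ t in s, g t := ENNReal.toReal_ofReal (integral_nonneg_of_ae hgnn)
  exact hts ▸ hsumm.hasSum

lemma hasSum_binomial {l x : ℝ} (hl : 0 < l) (hx0 : 0 ≤ x) (hx1 : x < 1) :
    HasSum (fun j : ℕ => poch l j / j.factorial * x ^ j) ((1 - x) ^ (-l)) := by
  have h1x : 0 < 1 - x := by linarith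
  set f : ℕ → ℝ → ℝ := fun j t => x ^ j / j.factorial * (t ^ (l + j - 1) * Real.exp (-t)) with hf
  set g : ℝ → ℝ := fun t => t ^ (l - 1) * Real.exp (-((1 - x) * t)) with hg
  have hmeas : ∀ j, AEMeasurable (f j) (volume.restrict (Ioi (0:ℝ))) := fun j => by
    rw [hf]; fun_prop
  have hnn : ∀ j, ∀ t ∈ Ioi (0:ℝ), 0 ≤ f j t := fun j t ht => by
    have : (0:ℝ) < t := ht
    rw [hf]; positivity
  have hsum : ∀ t ∈ Ioi (0:ℝ), HasSum (fun j => f j t) (g t) := by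
    intro t ht
    have ht' : (0:ℝ) < t := ht
    have hexp : HasSum (fun j : ℕ => (x * t) ^ j / j.factorial) (Real.exp (x * t)) := by
      rw [Real.exp_eq_exp_ℝ]
      exact NormedSpace.expSeries_div_hasSum_exp (x * t)
    have h := hexp.mul_left (t ^ (l - 1) * Real.exp (-t))
    have e1 : (fun j : ℕ => t ^ (l - 1) * Real.exp (-t) * ((x * t) ^ j / j.factorial))
        = fun j => f j t := by
      funext j
      have ht2 : t ^ (l + j - 1) = t ^ (l - 1) * t ^ (j : ℕ) := by
        rw [← Real.rpow_natCast t j, ← Real.rpow_add ht']; ring_nf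
      rw [hf]; simp only [ht2, mul_pow]; ring
    have e2 : g t = t ^ (l - 1) * Real.exp (-t) * Real.exp (x * t) := by
      show t ^ (l - 1) * Real.exp (-((1 - x) * t)) = _
      rw [show -((1 - x) * t) = -t + x * t by ring, Real.exp_add]; ring
    rw [e1, ← e2] at h; exact h
  have hgint : IntegrableOn g (Ioi (0:ℝ)) := by
    have := integrableOn_rpow_mul_exp_neg_mul_rpow
      (show (-1:ℝ) < l - 1 by linarith) (one_pos) h1x
    refine this.congr_fun (fun t ht => ?_) measurableSet_Ioi
    beta_reduce; rw [Real.rpow_one, hg]; beta_reduce; ring_nf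
  have key := hasSum_integral_of_nonneg' measurableSet_Ioi hmeas hnn hsum hgint
  have hg_val : ∫ t in Ioi (0:ℝ), g t = (1 - x) ^ (-l) * Real.Gamma l := by
    rw [hg]
    rw [show (fun t : ℝ => t ^ (l - 1) * Real.exp (-((1 - x) * t)))
        = fun t : ℝ => t ^ (l - 1) * Real.exp (-((1 - x) * t)) from rfl]
    rw [Real.integral_rpow_mul_exp_neg_mul_Ioi hl h1x, one_div,
      Real.inv_rpow h1x.le, ← Real.rpow_neg h1x.le]
  have hf_val : ∀ j, ∫ t in Ioi (0:ℝ), f j t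
      = (poch l j / j.factorial * x ^ j) * Real.Gamma l := by
    intro j
    rw [hf]
    simp only []
    rw [MeasureTheory.integral_const_mul]
    have : ∫ t in Ioi (0:ℝ), t ^ (l + j - 1) * Real.exp (-t)
        = Real.Gamma (l + j) := by
      have := Real.integral_rpow_mul_exp_neg_mul_Ioi (a := l + j) (r := 1)
        (by positivity) one_pos
      simp only [one_mul, one_div, inv_one, Real.one_rpow] at this
      rw [this]
    rw [this, Gamma_add_nat l hl j]; ring
  rw [hg_val] at key
  have key2 := key.mul_right (Real.Gamma l)⁻¹
  have hΓ : Real.Gamma l ≠ 0 := (Real.Gamma_pos_of_pos hl).ne'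
  simp only [hf_val, mul_assoc, mul_inv_cancel₀ hΓ, mul_one] at key2
  exact key2

lemma integrableOn_rpow_mul_pow {q : ℝ} (hq : 0 < q) (j : ℕ) :
    IntegrableOn (fun v : ℝ => v ^ q * (1 - v) ^ j) (Ioo (0:ℝ) 1) := by
  have hvol : volume (Ioo (0:ℝ) 1) ≠ ⊤ := by simp [Real.volume_Ioo]
  refine Measure.integrableOn_of_bounded (M := 1) hvol
    ((by fun_prop : Measurable fun v : ℝ => v ^ q * (1 - v) ^ j).aestronglyMeasurable) ?_
  refine (ae_restrict_iff' measurableSet_Ioo).2 (Filter.Eventually.of_forall fun v hv => ?_)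
  have h0 : (0:ℝ) < v := hv.1
  have h1 : v < 1 := hv.2
  rw [Real.norm_eq_abs, abs_of_nonneg (mul_nonneg (Real.rpow_nonneg h0.le q)
    (pow_nonneg (by linarith) j))]
  have e1 : v ^ q ≤ 1 := Real.rpow_le_one h0.le h1.le hq.le
  have e2 : (1 - v) ^ j ≤ 1 := pow_le_one₀ (by linarith) (by linarith)
  nlinarith [Real.rpow_nonneg h0.le q, pow_nonneg (show (0:ℝ) ≤ 1 - v by linarith) j]

lemma beta_nat (j : ℕ) : ∀ {p : ℝ}, 0 < p →
    ∫ v in Ioo (0:ℝ) 1, v ^ p * (1 - v) ^ j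
      = j.factorial / ∏ i ∈ Finset.range (j + 1), (p + 1 + i) := by
  induction j with
  | zero =>
      intro p hp
      have hp1 : p + 1 ≠ 0 := by positivity
      rw [← integral_Ioc_eq_integral_Ioo, ← intervalIntegral.integral_of_le zero_le_one]
      simp only [pow_zero, mul_one]
      rw [integral_rpow (Or.inl (by linarith : (-1:ℝ) < p))]
      simp [Real.zero_rpow hp1]
  | succ j ih =>
      intro p hp
      have hstep : ∫ v in Ioo (0:ℝ) 1, v ^ p * (1 - v) ^ (j + 1)
          = (∫ v in Ioo (0:ℝ) 1, v ^ p * (1 - v) ^ j)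
            - ∫ v in Ioo (0:ℝ) 1, v ^ (p + 1) * (1 - v) ^ j := by
        rw [← integral_sub (integrableOn_rpow_mul_pow hp j)
          (integrableOn_rpow_mul_pow (by linarith) j)]
        refine setIntegral_congr_fun measurableSet_Ioo fun v hv => ?_
        have h0 : (0:ℝ) < v := hv.1
        rw [Real.rpow_add_one h0.ne' p, pow_succ]
        ring
      rw [hstep, ih hp, ih (by linarith : (0:ℝ) < p + 1)]
      set A : ℝ := ∏ i ∈ Finset.range (j + 1), (p + 1 + i) with hA
      set B : ℝ := ∏ i ∈ Finset.range (j + 1), (p + 1 + 1 + i) with hB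
      set C : ℝ := ∏ i ∈ Finset.range (j + 2), (p + 1 + i) with hC
      have hApos : 0 < A := Finset.prod_pos fun i _ => by positivity
      have hBpos : 0 < B := Finset.prod_pos fun i _ => by positivity
      have hCA : C = A * (p + 1 + (j + 1 : ℕ)) := Finset.prod_range_succ _ _
      have hCB : C = (p + 1) * B := by
        rw [hC, Finset.prod_range_succ', hB]
        have hcg : ∀ i ∈ Finset.range (j + 1), (p + 1 + ((i + 1 : ℕ) : ℝ)) = p + 1 + 1 + i :=
          fun i _ => by push_cast; ring
        rw [Finset.prod_congr rfl hcg]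
        norm_num [mul_comm]
      have hCpos : 0 < C := by rw [hCB]; positivity
      rw [eq_div_iff hCpos.ne']
      have e1 : ((j).factorial : ℝ) / A * C = (j).factorial * (p + 1 + (j + 1 : ℕ)) := by
        rw [hCA]; field_simp
      have e2 : ((j).factorial : ℝ) / B * C = (j).factorial * (p + 1) := by
        rw [hCB]; field_simp
      rw [sub_mul, e1, e2]
      push_cast [Nat.factorial_succ]
      ring

lemma main_core {k l a b : ℝ} (hk : 2 ≤ k) (hl : 0 < l) (ha : 0 < a) (hb : 0 < b) :
    ∫ y in Ioi (0:ℝ), incGamma (1-k) (a*y) * Real.exp (-(b*y)) * y ^ (k+l-2)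
      = a ^ (1-k) * Real.Gamma l * ∫ u in Ioi (1:ℝ), u ^ (-k) * (a*u+b) ^ (-l) := by
  have hIu : IntegrableOn (fun u : ℝ => u ^ (-k)) (Ioi (1:ℝ)) :=
    integrableOn_Ioi_rpow_of_lt (by linarith) one_pos
  -- Step 1: pointwise rewriting of the integrand as an inner integral over u
  have step1 : ∫ y in Ioi (0:ℝ), incGamma (1-k) (a*y) * Real.exp (-(b*y)) * y ^ (k+l-2)
      = ∫ y in Ioi (0:ℝ), ∫ u in Ioi (1:ℝ),
          a ^ (1-k) * u ^ (-k) * (Real.exp (-((a*u+b)*y)) * y ^ (l-1)) := by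
    refine setIntegral_congr_fun measurableSet_Ioi (fun y hy => ?_)
    have hy : (0:ℝ) < y := hy
    have hay : 0 < a * y := mul_pos ha hy
    have e0 : incGamma (1-k) (a*y)
        = (a*y) * ∫ u in Ioi (1:ℝ), Real.exp (-(a*y*u)) * (a*y*u) ^ (1-k-1) := by
      have h := MeasureTheory.integral_comp_mul_left_Ioi
        (fun t => Real.exp (-t) * t ^ (1-k-1)) 1 hay
      simp only [mul_one, smul_eq_mul] at h
      simp only [incGamma]
      rw [h, ← mul_assoc, mul_inv_cancel₀ hay.ne', one_mul]
    have e1 : ∀ u ∈ Ioi (1:ℝ),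
        a ^ (1-k) * u ^ (-k) * (Real.exp (-((a*u+b)*y)) * y ^ (l-1))
          = (Real.exp (-(a*y*u)) * (a*y*u) ^ (1-k-1))
            * ((a*y) * (Real.exp (-(b*y)) * y ^ (k+l-2))) := by
      intro u hu
      have hu1 : (1:ℝ) < u := hu
      have hu0 : (0:ℝ) < u := zero_lt_one.trans hu1
      have id1 : (a*y*u) ^ (1-k-1) = a ^ (1-k-1) * y ^ (1-k-1) * u ^ (1-k-1) := by
        rw [Real.mul_rpow hay.le hu0.le, Real.mul_rpow ha.le hy.le]
      have idq : (1-k-1 : ℝ) = -k := by ring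
      have id2 : Real.exp (-((a*u+b)*y)) = Real.exp (-(a*y*u)) * Real.exp (-(b*y)) := by
        rw [← Real.exp_add]; congr 1; ring
      have id3 : a ^ (1-k) = a * a ^ (-k) := by
        rw [show (1-k:ℝ) = 1 + -k by ring, Real.rpow_add ha, Real.rpow_one]
      have id4 : y ^ (l-1) = y * y ^ (-k) * y ^ (k+l-2) := by
        rw [show (l-1:ℝ) = 1 + -k + (k+l-2) by ring, Real.rpow_add hy, Real.rpow_add hy,
          Real.rpow_one]
      rw [id2, id3, id4, id1, idq]
      ring
    have e2 : (∫ u in Ioi (1:ℝ),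
          a ^ (1-k) * u ^ (-k) * (Real.exp (-((a*u+b)*y)) * y ^ (l-1)))
        = (∫ u in Ioi (1:ℝ), Real.exp (-(a*y*u)) * (a*y*u) ^ (1-k-1))
            * ((a*y) * (Real.exp (-(b*y)) * y ^ (k+l-2))) := by
      rw [← integral_mul_const]
      exact setIntegral_congr_fun measurableSet_Ioi e1
    rw [e2, e0]
    ring
  rw [step1]
  -- integrability for Fubini
  have hmeas : Measurable (fun p : ℝ × ℝ =>
      a ^ (1-k) * p.2 ^ (-k) * (Real.exp (-((a*p.2+b)*p.1)) * p.1 ^ (l-1))) := by fun_prop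
  have hIy : ∀ y : ℝ, 0 < y → Integrable
      (fun u => a ^ (1-k) * u ^ (-k) * (Real.exp (-((a*u+b)*y)) * y ^ (l-1)))
      (volume.restrict (Ioi (1:ℝ))) := by
    intro y hy
    refine Integrable.mono' (g := fun u => (a ^ (1-k) * y ^ (l-1)) * u ^ (-k))
      (hIu.const_mul _) ((by fun_prop : Measurable fun u : ℝ =>
        a ^ (1-k) * u ^ (-k) * (Real.exp (-((a*u+b)*y)) * y ^ (l-1))).aestronglyMeasurable) ?_
    refine (ae_restrict_iff' measurableSet_Ioi).2 (Filter.Eventually.of_forall fun u hu => ?_)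
    have hu1 : (1:ℝ) < u := hu
    have hu0 : (0:ℝ) < u := zero_lt_one.trans hu1
    have hnn : (0:ℝ) ≤ a ^ (1-k) * u ^ (-k) * (Real.exp (-((a*u+b)*y)) * y ^ (l-1)) :=
      mul_nonneg (mul_nonneg (Real.rpow_nonneg ha.le _) (Real.rpow_nonneg hu0.le _))
        (mul_nonneg (Real.exp_nonneg _) (Real.rpow_nonneg hy.le _))
    rw [Real.norm_eq_abs, abs_of_nonneg hnn]
    have hexp : Real.exp (-((a*u+b)*y)) ≤ 1 :=
      Real.exp_le_one_iff.2 (neg_nonpos.2 (mul_nonneg (by nlinarith) hy.le))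
    calc a ^ (1-k) * u ^ (-k) * (Real.exp (-((a*u+b)*y)) * y ^ (l-1))
        = (a ^ (1-k) * u ^ (-k) * y ^ (l-1)) * Real.exp (-((a*u+b)*y)) := by ring
      _ ≤ (a ^ (1-k) * u ^ (-k) * y ^ (l-1)) * 1 := by
          refine mul_le_mul_of_nonneg_left hexp ?_
          exact mul_nonneg (mul_nonneg (Real.rpow_nonneg ha.le _)
            (Real.rpow_nonneg hu0.le _)) (Real.rpow_nonneg hy.le _)
      _ = a ^ (1-k) * y ^ (l-1) * u ^ (-k) := by ring
  have hGint : IntegrableOn (fun y : ℝ => Real.exp (-(b*y)) * y ^ (l-1)) (Ioi (0:ℝ)) := by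
    have := integrableOn_rpow_mul_exp_neg_mul_rpow
      (show (-1:ℝ) < l - 1 by linarith) (one_pos) hb
    refine this.congr_fun (fun y hy => ?_) measurableSet_Ioi
    beta_reduce; rw [Real.rpow_one]; ring_nf
  have hASM : AEStronglyMeasurable (Function.uncurry fun y u =>
      a ^ (1-k) * u ^ (-k) * (Real.exp (-((a*u+b)*y)) * y ^ (l-1)))
      ((volume.restrict (Ioi (0:ℝ))).prod (volume.restrict (Ioi (1:ℝ)))) :=
    hmeas.aestronglyMeasurable
  have hint : Integrable (Function.uncurry fun y u =>
      a ^ (1-k) * u ^ (-k) * (Real.exp (-((a*u+b)*y)) * y ^ (l-1)))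
      ((volume.restrict (Ioi (0:ℝ))).prod (volume.restrict (Ioi (1:ℝ)))) := by
    refine (integrable_prod_iff hASM).2 ⟨?_, ?_⟩
    · refine (ae_restrict_iff' measurableSet_Ioi).2 (Filter.Eventually.of_forall fun y hy => ?_)
      exact hIy y hy
    · refine Integrable.mono'
        (g := fun y => (a ^ (1-k) * ∫ u in Ioi (1:ℝ), u ^ (-k)) * (Real.exp (-(b*y)) * y ^ (l-1)))
        ((hGint.const_mul _))
        (hASM.norm.integral_prod_right') ?_
      refine (ae_restrict_iff' measurableSet_Ioi).2 (Filter.Eventually.of_forall fun y hy => ?_)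
      have hy : (0:ℝ) < y := hy
      simp only [Function.uncurry_apply_pair]
      have hnn1 : (0:ℝ) ≤ ∫ u in Ioi (1:ℝ),
          ‖a ^ (1-k) * u ^ (-k) * (Real.exp (-((a*u+b)*y)) * y ^ (l-1))‖ :=
        integral_nonneg fun u => norm_nonneg _
      rw [Real.norm_eq_abs, abs_of_nonneg hnn1]
      have hmaj : ∀ u ∈ Ioi (1:ℝ),
          ‖a ^ (1-k) * u ^ (-k) * (Real.exp (-((a*u+b)*y)) * y ^ (l-1))‖
            ≤ (a ^ (1-k) * (Real.exp (-(b*y)) * y ^ (l-1))) * u ^ (-k) := by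
        intro u hu
        have hu1 : (1:ℝ) < u := hu
        have hu0 : (0:ℝ) < u := zero_lt_one.trans hu1
        have hnn : (0:ℝ) ≤ a ^ (1-k) * u ^ (-k) * (Real.exp (-((a*u+b)*y)) * y ^ (l-1)) :=
          mul_nonneg (mul_nonneg (Real.rpow_nonneg ha.le _) (Real.rpow_nonneg hu0.le _))
            (mul_nonneg (Real.exp_nonneg _) (Real.rpow_nonneg hy.le _))
        rw [Real.norm_eq_abs, abs_of_nonneg hnn]
        have hexp : Real.exp (-((a*u+b)*y)) ≤ Real.exp (-(b*y)) :=
          Real.exp_le_exp.2 (by nlinarith [mul_pos (mul_pos ha hu0) hy])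
        calc a ^ (1-k) * u ^ (-k) * (Real.exp (-((a*u+b)*y)) * y ^ (l-1))
            = (a ^ (1-k) * u ^ (-k) * y ^ (l-1)) * Real.exp (-((a*u+b)*y)) := by ring
          _ ≤ (a ^ (1-k) * u ^ (-k) * y ^ (l-1)) * Real.exp (-(b*y)) := by
              refine mul_le_mul_of_nonneg_left hexp ?_
              exact mul_nonneg (mul_nonneg (Real.rpow_nonneg ha.le _)
                (Real.rpow_nonneg hu0.le _)) (Real.rpow_nonneg hy.le _)
          _ = (a ^ (1-k) * (Real.exp (-(b*y)) * y ^ (l-1))) * u ^ (-k) := by ring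
      calc (∫ u in Ioi (1:ℝ), ‖a ^ (1-k) * u ^ (-k) * (Real.exp (-((a*u+b)*y)) * y ^ (l-1))‖)
          ≤ ∫ u in Ioi (1:ℝ), (a ^ (1-k) * (Real.exp (-(b*y)) * y ^ (l-1))) * u ^ (-k) :=
            setIntegral_mono_on (hIy y hy).norm (hIu.const_mul _) measurableSet_Ioi hmaj
        _ = (a ^ (1-k) * ∫ u in Ioi (1:ℝ), u ^ (-k)) * (Real.exp (-(b*y)) * y ^ (l-1)) := by
            rw [integral_const_mul]; ring
  rw [MeasureTheory.integral_integral_swap hint]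
  -- evaluate the inner y-integral
  have step3 : ∫ u in Ioi (1:ℝ), ∫ y in Ioi (0:ℝ),
      a ^ (1-k) * u ^ (-k) * (Real.exp (-((a*u+b)*y)) * y ^ (l-1))
      = ∫ u in Ioi (1:ℝ), (a ^ (1-k) * Real.Gamma l) * (u ^ (-k) * (a*u+b) ^ (-l)) := by
    refine setIntegral_congr_fun measurableSet_Ioi fun u hu => ?_
    have hu1 : (1:ℝ) < u := hu
    have hau : 0 < a*u+b := by nlinarith
    rw [MeasureTheory.integral_const_mul]
    have hinner : ∫ y in Ioi (0:ℝ), Real.exp (-((a*u+b)*y)) * y ^ (l-1)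
        = (1/(a*u+b)) ^ l * Real.Gamma l := by
      rw [← Real.integral_rpow_mul_exp_neg_mul_Ioi hl hau]
      exact setIntegral_congr_fun measurableSet_Ioi fun y hy => by ring
    rw [hinner, one_div, Real.inv_rpow hau.le, ← Real.rpow_neg hau.le]
    ring
  rw [step3, MeasureTheory.integral_const_mul]

lemma u_int {k l a b : ℝ} (hk : 2 ≤ k) (hl : 0 < l) (ha : 0 < a) (hb : 0 < b) :
    ∫ u in Ioi (1:ℝ), u ^ (-k) * (a*u+b) ^ (-l)
      = ∫ v in Ioo (0:ℝ) 1, v ^ (k+l-2) * (a+b*v) ^ (-l) := by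
  have himg : (fun v : ℝ => v⁻¹) '' Ioo 0 1 = Ioi (1:ℝ) := by
    ext x
    constructor
    · rintro ⟨v, ⟨hv0, hv1⟩, rfl⟩
      exact one_lt_inv₀ hv0 |>.2 hv1
    · intro hx
      have hx1 : (1:ℝ) < x := hx
      have hx0 : (0:ℝ) < x := zero_lt_one.trans hx1
      exact ⟨x⁻¹, ⟨inv_pos.2 hx0, (inv_lt_one₀ hx0).2 hx1⟩, inv_inv x⟩
  have hderiv : ∀ v ∈ Ioo (0:ℝ) 1,
      HasDerivWithinAt (fun v : ℝ => v⁻¹) (-(v^2)⁻¹) (Ioo 0 1) v :=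
    fun v hv => (hasDerivAt_inv (ne_of_gt hv.1)).hasDerivWithinAt
  have hinj : InjOn (fun v : ℝ => v⁻¹) (Ioo 0 1) := fun p _ q _ h => inv_injective h
  have hch := integral_image_eq_integral_abs_deriv_smul measurableSet_Ioo hderiv hinj
    (fun x => x ^ (-k) * (a*x+b) ^ (-l))
  rw [himg] at hch
  rw [hch]
  refine setIntegral_congr_fun measurableSet_Ioo fun v hv => ?_
  have hv0 : (0:ℝ) < v := hv.1
  have hv1 : v < 1 := hv.2
  have hab : 0 < a + b*v := by nlinarith
  rw [smul_eq_mul, abs_neg, abs_inv, abs_of_nonneg (by positivity : (0:ℝ) ≤ v^2)]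
  have i1 : (v⁻¹) ^ (-k) = v ^ k := by
    rw [Real.inv_rpow hv0.le, Real.rpow_neg hv0.le, inv_inv]
  have i2 : (a*v⁻¹+b) ^ (-l) = (a+b*v) ^ (-l) * v ^ l := by
    have hv' : a*v⁻¹+b = (a+b*v) / v := by field_simp
    rw [hv', Real.div_rpow hab.le hv0.le, div_eq_mul_inv, Real.rpow_neg hv0.le, inv_inv]
  have i3 : v ^ (k+l-2) = v ^ k * v ^ l * (v^2)⁻¹ := by
    rw [show (k+l-2:ℝ) = k + l + (-2) by ring, Real.rpow_add hv0, Real.rpow_add hv0,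
      show ((-2):ℝ) = -((2:ℕ):ℝ) by norm_num, Real.rpow_neg hv0.le, Real.rpow_natCast]
  rw [i1, i2, i3]
  ring

lemma v_series {k l a b z : ℝ} (hk : 2 ≤ k) (hl : 0 < l) (ha : 0 < a) (hb : 0 < b)
    (hz0 : 0 < z) (hz1 : z < 1) (hzc : b = z * (a+b)) :
    HasSum (fun j : ℕ => (poch l j / j.factorial * z ^ j * (a+b) ^ (-l)) *
        (j.factorial / ∏ i ∈ Finset.range (j+1), (k+l-2 + 1 + i)))
      (∫ v in Ioo (0:ℝ) 1, v ^ (k+l-2) * (a+b*v) ^ (-l)) := by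
  have hc : 0 < a + b := add_pos ha hb
  have hkl2 : 0 < k + l - 2 := by linarith
  have hmeas : ∀ j : ℕ, AEMeasurable
      (fun v : ℝ => (poch l j / j.factorial * z ^ j * (a+b) ^ (-l)) * (v ^ (k+l-2) * (1-v) ^ j))
      (volume.restrict (Ioo (0:ℝ) 1)) := fun j => by fun_prop
  have hnn : ∀ j : ℕ, ∀ v ∈ Ioo (0:ℝ) 1, 0 ≤
      (poch l j / j.factorial * z ^ j * (a+b) ^ (-l)) * (v ^ (k+l-2) * (1-v) ^ j) := by
    intro j v hv
    exact mul_nonneg (mul_nonneg (mul_nonneg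
      (div_nonneg (poch_pos hl j).le (Nat.cast_nonneg _)) (pow_nonneg hz0.le j))
      (Real.rpow_nonneg hc.le _))
      (mul_nonneg (Real.rpow_nonneg hv.1.le _) (pow_nonneg (by linarith [hv.2]) j))
  have hsum : ∀ v ∈ Ioo (0:ℝ) 1, HasSum
      (fun j : ℕ => (poch l j / j.factorial * z ^ j * (a+b) ^ (-l)) * (v ^ (k+l-2) * (1-v) ^ j))
      (v ^ (k+l-2) * (a+b*v) ^ (-l)) := by
    intro v hv
    have hv0 : (0:ℝ) < v := hv.1
    have hv1 : v < 1 := hv.2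
    have hx0 : (0:ℝ) ≤ z * (1-v) := mul_nonneg hz0.le (by linarith)
    have hx1 : z * (1-v) < 1 := by nlinarith
    have hbin := (hasSum_binomial hl hx0 hx1).mul_left (v ^ (k+l-2) * (a+b) ^ (-l))
    have e1 : (fun j : ℕ => v ^ (k+l-2) * (a+b) ^ (-l) *
          (poch l j / j.factorial * (z * (1-v)) ^ j))
        = fun j : ℕ => (poch l j / j.factorial * z ^ j * (a+b) ^ (-l)) *
            (v ^ (k+l-2) * (1-v) ^ j) := by
      funext j; rw [mul_pow]; ring
    have e2 : v ^ (k+l-2) * (a+b) ^ (-l) * (1 - z * (1-v)) ^ (-l)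
        = v ^ (k+l-2) * (a+b*v) ^ (-l) := by
      have hq : 1 - z * (1-v) = (a+b*v) / (a+b) := by
        rw [eq_div_iff hc.ne']
        linear_combination (1-v) * hzc
      have hab : 0 < a + b*v := by nlinarith
      rw [hq, Real.div_rpow hab.le hc.le, Real.rpow_neg hc.le,
        div_eq_mul_inv, inv_inv]
      have hcl : ((a+b) ^ l) ≠ 0 := (Real.rpow_pos_of_pos hc l).ne'
      field_simp
    rw [e1, e2] at hbin
    exact hbin
  have hgint : IntegrableOn (fun v : ℝ => v ^ (k+l-2) * (a+b*v) ^ (-l)) (Ioo (0:ℝ) 1) := by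
    have hvol : volume (Ioo (0:ℝ) 1) ≠ ⊤ := by simp [Real.volume_Ioo]
    refine Measure.integrableOn_of_bounded (M := (a ^ l)⁻¹) hvol
      ((by fun_prop : Measurable fun v : ℝ =>
        v ^ (k+l-2) * (a+b*v) ^ (-l)).aestronglyMeasurable) ?_
    refine (ae_restrict_iff' measurableSet_Ioo).2 (Filter.Eventually.of_forall fun v hv => ?_)
    have hv0 : (0:ℝ) < v := hv.1
    have hv1 : v < 1 := hv.2
    have hab : 0 < a + b*v := by nlinarith
    have h1 : v ^ (k+l-2) ≤ 1 := Real.rpow_le_one hv0.le hv1.le hkl2.le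
    have h2 : (a+b*v) ^ (-l) ≤ (a ^ l)⁻¹ := by
      rw [Real.rpow_neg hab.le]
      refine inv_anti₀ (Real.rpow_pos_of_pos ha l) ?_
      exact Real.rpow_le_rpow ha.le (by nlinarith) hl.le
    have hnn2 : (0:ℝ) ≤ v ^ (k+l-2) * (a+b*v) ^ (-l) :=
      mul_nonneg (Real.rpow_nonneg hv0.le _) (Real.rpow_nonneg hab.le _)
    rw [Real.norm_eq_abs, abs_of_nonneg hnn2]
    calc v ^ (k+l-2) * (a+b*v) ^ (-l) ≤ 1 * (a ^ l)⁻¹ := by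
          refine mul_le_mul h1 h2 (Real.rpow_nonneg hab.le _) zero_le_one
      _ = (a ^ l)⁻¹ := one_mul _
  have key := hasSum_integral_of_nonneg' measurableSet_Ioo hmeas hnn hsum hgint
  have hval : ∀ j : ℕ, (∫ v in Ioo (0:ℝ) 1,
      (poch l j / j.factorial * z ^ j * (a+b) ^ (-l)) * (v ^ (k+l-2) * (1-v) ^ j))
      = (poch l j / j.factorial * z ^ j * (a+b) ^ (-l)) *
        (j.factorial / ∏ i ∈ Finset.range (j+1), (k+l-2 + 1 + i)) := by
    intro j
    rw [MeasureTheory.integral_const_mul, beta_nat j hkl2]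
  rw [funext hval] at key
  exact key

theorem incGamma_integral_hypergeometric (k l : ℝ) (hk : 2 ≤ k) (hl : 0 < l)
    (n tm : ℚ) (hn : 0 < n) (hlt : n < tm) :
    ∫ y in Set.Ioi (0 : ℝ),
        incGamma (1 - k) (4 * π * |(n : ℝ) - (tm : ℝ)| * y) *
          Real.exp (-(4 * π * (n : ℝ) * y)) * y ^ (k + l - 2)
      = ((4 * π * |(n : ℝ) - (tm : ℝ)|) ^ (1 - k) * Real.Gamma l /
          ((k + l - 1) * (4 * π * (tm : ℝ)) ^ l)) * twoF1 1 l (k + l) ((n : ℝ) / (tm : ℝ)) := by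
  have hπ := Real.pi_pos
  have hn' : (0:ℝ) < (n:ℝ) := by exact_mod_cast hn
  have hnt : (n:ℝ) < (tm:ℝ) := by exact_mod_cast hlt
  have htm' : (0:ℝ) < (tm:ℝ) := hn'.trans hnt
  set a : ℝ := 4 * π * |(n:ℝ) - (tm:ℝ)| with ha_def
  set b : ℝ := 4 * π * (n:ℝ) with hb_def
  set C : ℝ := 4 * π * (tm:ℝ) with hC_def
  set z : ℝ := (n:ℝ) / (tm:ℝ) with hz_def
  have habs : |(n:ℝ) - (tm:ℝ)| = (tm:ℝ) - (n:ℝ) := by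
    rw [abs_of_neg (by linarith)]; ring
  have ha : 0 < a := by
    rw [ha_def, habs]
    exact mul_pos (by positivity) (by linarith)
  have hb : 0 < b := mul_pos (by positivity) hn'
  have hC : 0 < C := mul_pos (by positivity) htm'
  have habC : a + b = C := by rw [ha_def, hb_def, hC_def, habs]; ring
  have hz0 : 0 < z := div_pos hn' htm'
  have hz1 : z < 1 := (div_lt_one htm').2 hnt
  have hzc : b = z * (a + b) := by
    rw [habC, hb_def, hz_def, hC_def]; field_simp
  rw [main_core hk hl ha hb, u_int hk hl ha hb]
  have hs := v_series hk hl ha hb hz0 hz1 hzc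
  rw [← hs.tsum_eq, habC]
  have hkl1 : (0:ℝ) < k + l - 1 := by linarith
  have hkl : (0:ℝ) < k + l := by linarith
  have hterm : ∀ j : ℕ,
      (poch l j / j.factorial * z ^ j * C ^ (-l)) *
        (j.factorial / ∏ i ∈ Finset.range (j+1), (k+l-2 + 1 + i))
      = (1/((k+l-1) * C ^ l)) *
          ((poch 1 j * poch l j / (poch (k+l) j * (j.factorial : ℝ))) * z ^ j) := by
    intro j
    have hprod : (∏ i ∈ Finset.range (j+1), (k+l-2 + 1 + (i:ℝ))) = (k+l-1) * poch (k+l) j := by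
      have h1 : (∏ i ∈ Finset.range (j+1), (k+l-2 + 1 + (i:ℝ))) = poch (k+l-2+1) (j+1) := rfl
      rw [h1, poch_succ', show (k+l-2+1+1:ℝ) = k+l by ring, show (k+l-2+1:ℝ) = k+l-1 by ring]
    rw [hprod, poch_one]
    have hpochP : (0:ℝ) < poch (k+l) j := poch_pos hkl j
    have hfac : ((j.factorial : ℝ)) ≠ 0 := Nat.cast_ne_zero.2 j.factorial_ne_zero
    have hCl : (C:ℝ) ^ l ≠ 0 := (Real.rpow_pos_of_pos hC l).ne'
    rw [Real.rpow_neg hC.le]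
    field_simp
  rw [tsum_congr hterm, tsum_mul_left]
  simp only [twoF1]
  ring
end
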